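/- Correctness of AccMut (Theorem 1, AccMut versus standard mutation analysis): for every fuel bound n, every finite set I ⊆ M, every mutant ID i ∈ I, and every state s, accRun n I s i = stdRun n i s; in particular, for every mutant i ∈ M, the final state recorded by AccMut for i after n steps starting from the initial state equals the state reached by the standard mutation analysis of mutant i after n steps, so both produce the same sequence of save(s, i) invocations. -/
import Mathlib


/-- A variant at a location: a code block together with the set of mutant IDs
for which this variant is enabled. -/
structure Variant (C ID : Type) where
  code : C
  I : Finset ID
deriving DecidableEq

/-- A mutation model: a finite set `M` of all mutant IDs and a mutation procedure `p`
assigning to each location a finite set of variants, such that ID sets of distinct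
variants at a location are pairwise disjoint and their union is `M`. -/
structure MutModel (L C ID : Type) [DecidableEq C] [DecidableEq ID] where
  M : Finset ID
  p : L → Finset (Variant C ID)
  subset_M : ∀ l : L, ∀ v ∈ p l, v.I ⊆ M
  disj : ∀ l : L, ∀ v ∈ p l, ∀ w ∈ p l, v ≠ w → Disjoint v.I w.I
  cover : ∀ l : L, (p l).biUnion (fun v => v.I) = M

section Runs

variable {L C ID S : Type} [DecidableEq C] [DecidableEq ID] [DecidableEq S]

/-- The standard step of mutant `i` at state `s`: if `φ s = some l`, execute the
code of the unique variant in `p l` enabled for `i`; at a terminated state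
(`φ s = none`) the state is left unchanged. -/
noncomputable def step (m : MutModel L C ID) (φ : S → Option L) (execute : S → C → S)
    (i : ID) (s : S) : S :=
  match φ s with
  | none => s
  | some l => if h : ∃ v ∈ m.p l, i ∈ v.I then execute s h.choose.code else s

/-- The standard mutation-analysis run of mutant `i` for `n` steps. -/
noncomputable def stdRun (m : MutModel L C ID) (φ : S → Option L) (execute : S → C → S) :
    ℕ → ID → S → S
  | 0, _, s => s
  | n + 1, i, s =>
    match φ s with
    | none => s
    | some _ => stdRun m φ execute n i (step m φ execute i s)

/-- The AccMut run: a process representing the mutant IDs `I` advances, for the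
mutant `i`, by clustering `I` into the equivalence class
`K = {j ∈ I : step j s = step i s}` of `i` modulo the state `s` and applying the
change of an arbitrary representative `rep K` of the class. -/
noncomputable def accRun (m : MutModel L C ID) (φ : S → Option L) (execute : S → C → S)
    (rep : Finset ID → ID) : ℕ → Finset ID → S → ID → S
  | 0, _, s, _ => s
  | n + 1, I, s, i =>
    match φ s with
    | none => s
    | some _ =>
      accRun m φ execute rep n
        (I.filter fun j => step m φ execute j s = step m φ execute i s)
        (step m φ execute
          (rep (I.filter fun j => step m φ execute j s = step m φ execute i s)) s) i

/-- Correctness of AccMut versus standard mutation analysis (Theorem 1): for every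
fuel bound `n`, every `I ⊆ M`, every `i ∈ I` and every state `s`, the AccMut run
records for `i` exactly the state reached by the standard run of mutant `i`. -/
theorem stmt7 (m : MutModel L C ID) (φ : S → Option L) (execute : S → C → S)
    (rep : Finset ID → ID) (hrep : ∀ K : Finset ID, K.Nonempty → rep K ∈ K) :
    ∀ (n : ℕ) (I : Finset ID), I ⊆ m.M → ∀ i ∈ I, ∀ s : S,
      accRun m φ execute rep n I s i = stdRun m φ execute n i s := by
  intro n
  induction n with
  | zero => intro I hI i hi s; rfl
  | succ n ih =>
    intro I hI i hi s
    rw [accRun, stdRun]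
    cases hφ : φ s with
    | none => simp [hφ]
    | some l =>
      simp only [hφ]
      set K := I.filter fun j => step m φ execute j s = step m φ execute i s with hK
      have hiK : i ∈ K := by simp [hK, hi]
      have hrK : rep K ∈ K := hrep K ⟨i, hiK⟩
      have hstep : step m φ execute (rep K) s = step m φ execute i s :=
        (Finset.mem_filter.mp hrK).2
      rw [hstep]
      exact ih K (fun j hj => hI (Finset.mem_filter.mp hj).1) i hiK _

end Runs
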